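/- For each n, let ε_0, ε_1, …, ε_n be independent random signs, each equal to +1 or −1 with probability 1/2, let Q_n(x) = Σ_{m=0}^n C(n,m) ε_m sin(mx), let M̃_n = sup_{0 ≤ x ≤ 2π} |Q_n(x)|, and let R_n = Σ_{m=0}^n C(n,m)². Then the probability of the event M̃_n ≤ 2·√(R_n · ln n) tends to 1 as n → ∞. -/

import Mathlib

open MeasureTheory Finset Filter Real
open scoped ENNReal

noncomputable def signs (n : ℕ) : Measure (Fin (n+1) → Bool) :=
  (PMF.uniformOfFintype (Fin (n+1) → Bool)).toMeasure

noncomputable def eps {n : ℕ} (ω : Fin (n+1) → Bool) (m : Fin (n+1)) : ℝ :=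
  if ω m then 1 else -1

noncomputable def Q (n : ℕ) (ω : Fin (n+1) → Bool) (x : ℝ) : ℝ :=
  ∑ m : Fin (n+1), (n.choose m : ℝ) * eps ω m * Real.sin (m * x)

noncomputable def Mtilde (n : ℕ) (ω : Fin (n+1) → Bool) : ℝ :=
  ⨆ x : Set.Icc (0:ℝ) (2*π), |Q n ω x|

noncomputable def R (n : ℕ) : ℝ :=
  ∑ m ∈ range (n+1), (n.choose m : ℝ)^2

/-- counting function -/
noncomputable def cnt (n : ℕ) (s : Set (Fin (n+1) → Bool)) : ℝ :=
  ∑ ω : Fin (n+1) → Bool, s.indicator (fun _ => (1:ℝ)) ω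

lemma cnt_nonneg (n : ℕ) (s : Set (Fin (n+1) → Bool)) : 0 ≤ cnt n s :=
  Finset.sum_nonneg fun ω _ => Set.indicator_nonneg (fun _ _ => zero_le_one) ω

lemma signs_apply (n : ℕ) (s : Set (Fin (n+1) → Bool)) :
    signs n s = ENNReal.ofReal (cnt n s / 2^(n+1)) := by
  classical
  have hcard : (Fintype.card (Fin (n+1) → Bool)) = 2^(n+1) := by simp
  rw [signs, PMF.toMeasure_apply_fintype]
  rw [cnt, ENNReal.ofReal_div_of_pos (by positivity),
    ENNReal.ofReal_sum_of_nonneg (fun ω _ => Set.indicator_nonneg (fun _ _ => zero_le_one) ω),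
    div_eq_mul_inv, Finset.sum_mul]
  refine Finset.sum_congr rfl fun ω _ => ?_
  rw [Set.indicator_apply, Set.indicator_apply]
  split_ifs with h
  · rw [PMF.uniformOfFintype_apply, hcard, ENNReal.ofReal_one, one_mul]
    rw [show ((2:ℝ)^(n+1)) = ((2^(n+1) : ℕ) : ℝ) by push_cast; ring, ENNReal.ofReal_natCast]
  · simp

lemma sin_lip (a b : ℝ) : |Real.sin a - Real.sin b| ≤ |a - b| := by
  rw [Real.sin_sub_sin]
  calc |2 * Real.sin ((a-b)/2) * Real.cos ((a+b)/2)|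
      = 2 * |Real.sin ((a-b)/2)| * |Real.cos ((a+b)/2)| := by
        rw [abs_mul, abs_mul, abs_two]
    _ ≤ 2 * |(a-b)/2| * 1 := by
        have h1 : |Real.sin ((a-b)/2)| ≤ |(a-b)/2| := Real.abs_sin_le_abs
        have h2 : |Real.cos ((a+b)/2)| ≤ 1 := Real.abs_cos_le_one _
        nlinarith [abs_nonneg ((a-b)/2), abs_nonneg (Real.cos ((a+b)/2)),
          abs_nonneg (Real.sin ((a-b)/2))]
    _ = |a - b| := by rw [abs_div, abs_two]; ring

lemma abs_eps (n : ℕ) (ω : Fin (n+1) → Bool) (m : Fin (n+1)) : |eps ω m| = 1 := by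
  unfold eps; split_ifs <;> norm_num

lemma Q_lip (n : ℕ) (ω : Fin (n+1) → Bool) (x y : ℝ) :
    |Q n ω x - Q n ω y| ≤ (n:ℝ) * 2^n * |x - y| := by
  unfold Q
  rw [← Finset.sum_sub_distrib]
  calc |∑ m : Fin (n+1), ((n.choose m : ℝ) * eps ω m * Real.sin (m * x)
          - (n.choose m : ℝ) * eps ω m * Real.sin (m * y))|
      ≤ ∑ m : Fin (n+1), |(n.choose m : ℝ) * eps ω m * Real.sin (m * x)
          - (n.choose m : ℝ) * eps ω m * Real.sin (m * y)| := Finset.abs_sum_le_sum_abs _ _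
    _ ≤ ∑ m : Fin (n+1), (n.choose m : ℝ) * ((n:ℝ) * |x - y|) := by
        refine Finset.sum_le_sum fun m _ => ?_
        have h1 : (n.choose m : ℝ) * eps ω m * Real.sin (m * x)
            - (n.choose m : ℝ) * eps ω m * Real.sin (m * y)
            = (n.choose m : ℝ) * eps ω m * (Real.sin (m * x) - Real.sin (m * y)) := by ring
        rw [h1, abs_mul, abs_mul, abs_eps, mul_one]
        have h2 : |Real.sin ((m:ℝ) * x) - Real.sin ((m:ℝ) * y)| ≤ (m:ℝ) * |x - y| := by
          calc |Real.sin ((m:ℝ) * x) - Real.sin ((m:ℝ) * y)| ≤ |(m:ℝ)*x - (m:ℝ)*y| := sin_lip _ _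
            _ = (m:ℝ) * |x - y| := by
                rw [← mul_sub, abs_mul, abs_of_nonneg (by positivity : (0:ℝ) ≤ (m:ℝ))]
        have hmn : ((m:ℕ):ℝ) ≤ (n:ℝ) := by
          exact_mod_cast Nat.le_of_lt_succ m.2
        calc |(n.choose m : ℝ)| * |Real.sin ((m:ℝ) * x) - Real.sin ((m:ℝ) * y)|
            ≤ (n.choose m : ℝ) * ((m:ℝ) * |x - y|) := by
              rw [abs_of_nonneg (by positivity)]
              gcongr
          _ ≤ (n.choose m : ℝ) * ((n:ℝ) * |x - y|) := by gcongr
    _ = (∑ m : Fin (n+1), (n.choose m : ℝ)) * ((n:ℝ) * |x - y|) := by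
        rw [Finset.sum_mul]
    _ = (n:ℝ) * 2^n * |x - y| := by
        rw [Fin.sum_univ_eq_sum_range (fun m => (n.choose m : ℝ)),
          show (∑ m ∈ range (n+1), (n.choose m : ℝ)) = ((2:ℝ))^n by
            exact_mod_cast congrArg (Nat.cast : ℕ → ℝ) (Nat.sum_range_choose n)]
        ring

lemma R_pos (n : ℕ) : (1:ℝ) ≤ R n := by
  unfold R
  calc (1:ℝ) = (n.choose 0 : ℝ)^2 := by simp
    _ ≤ ∑ m ∈ range (n+1), (n.choose m : ℝ)^2 :=
        Finset.single_le_sum (f := fun m => (n.choose m : ℝ)^2) (fun m _ => by positivity)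
          (Finset.mem_range.mpr (Nat.succ_pos n))

lemma R_lower (n : ℕ) : ((2:ℝ)^n)^2 ≤ ((n:ℝ)+1) * R n := by
  have h := sq_sum_le_card_mul_sum_sq (s := range (n+1)) (f := fun m => (n.choose m : ℝ))
  rw [Finset.card_range] at h
  have h2 : (∑ m ∈ range (n+1), (n.choose m : ℝ)) = (2:ℝ)^n := by
    exact_mod_cast congrArg (Nat.cast : ℕ → ℝ) (Nat.sum_range_choose n)
  rw [h2] at h
  calc ((2:ℝ)^n)^2 ≤ ((n+1 : ℕ):ℝ) * ∑ m ∈ range (n+1), (n.choose m : ℝ)^2 := h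
    _ = ((n:ℝ)+1) * R n := by push_cast; rfl

open scoped Classical in
lemma chernoff_count (n : ℕ) (a : Fin (n+1) → ℝ) (t Rb : ℝ) (hR : 0 < Rb)
    (ha : ∑ m : Fin (n+1), a m ^ 2 ≤ Rb) (ht : 0 ≤ t) :
    cnt n {ω | t ≤ ∑ m : Fin (n+1), a m * eps ω m}
      ≤ 2^(n+1) * Real.exp (-(t^2) / (2*Rb)) := by
  set l := t / Rb with hl
  have hl0 : 0 ≤ l := div_nonneg ht hR.le
  have step1 : ∀ ω : Fin (n+1) → Bool,
      ({ω | t ≤ ∑ m : Fin (n+1), a m * eps ω m}.indicator (fun _ => (1:ℝ)) ω)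
        ≤ Real.exp (l * ((∑ m : Fin (n+1), a m * eps ω m) - t)) := by
    intro ω
    rw [Set.indicator_apply]
    split_ifs with h
    · have : (0:ℝ) ≤ l * ((∑ m : Fin (n+1), a m * eps ω m) - t) := by
        have := Set.mem_setOf_eq ▸ h
        have h2 : (0:ℝ) ≤ (∑ m : Fin (n+1), a m * eps ω m) - t := by
          simp only [Set.mem_setOf_eq] at h; linarith
        positivity
      exact Real.one_le_exp this
    · exact (Real.exp_pos _).le
  have sum_prod : (∑ ω : Fin (n+1) → Bool, ∏ m : Fin (n+1), Real.exp (l * (a m * eps ω m)))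
      = ∏ m : Fin (n+1), (Real.exp (l * a m) + Real.exp (-(l * a m))) := by
    have h := Finset.prod_univ_sum (fun _ : Fin (n+1) => (Finset.univ : Finset Bool))
      (fun m b => Real.exp (l * (a m * (if b then (1:ℝ) else -1))))
    rw [Fintype.piFinset_univ] at h
    simp only [eps]
    rw [← h]
    refine Finset.prod_congr rfl fun m _ => ?_
    rw [Fintype.sum_bool]
    norm_num
  calc cnt n {ω | t ≤ ∑ m : Fin (n+1), a m * eps ω m}
      ≤ ∑ ω : Fin (n+1) → Bool, Real.exp (l * ((∑ m : Fin (n+1), a m * eps ω m) - t)) :=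
        Finset.sum_le_sum fun ω _ => step1 ω
    _ = Real.exp (-(l*t)) * ∑ ω : Fin (n+1) → Bool,
          ∏ m : Fin (n+1), Real.exp (l * (a m * eps ω m)) := by
        rw [Finset.mul_sum]
        refine Finset.sum_congr rfl fun ω _ => ?_
        rw [← Real.exp_sum, ← Real.exp_add]
        congr 1
        rw [mul_sub, ← Finset.mul_sum]
        ring
    _ = Real.exp (-(l*t)) * ∏ m : Fin (n+1), (Real.exp (l * a m) + Real.exp (-(l * a m))) := by
        rw [sum_prod]
    _ ≤ Real.exp (-(l*t)) * ∏ m : Fin (n+1), (2 * Real.exp ((l * a m)^2/2)) := by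
        refine mul_le_mul_of_nonneg_left (Finset.prod_le_prod (fun m _ => by positivity)
          (fun m _ => ?_)) (Real.exp_pos _).le
        have := Real.cosh_le_exp_half_sq (l * a m)
        rw [Real.cosh_eq] at this
        linarith
    _ = Real.exp (-(l*t)) * (2^(n+1) * Real.exp (∑ m : Fin (n+1), (l * a m)^2/2)) := by
        rw [Finset.prod_mul_distrib, Finset.prod_const, Real.exp_sum]
        simp [Finset.card_univ]
    _ ≤ 2^(n+1) * Real.exp (-(t^2) / (2*Rb)) := by
        rw [← mul_assoc, mul_comm (Real.exp _) ((2:ℝ)^(n+1)), mul_assoc, ← Real.exp_add]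
        refine mul_le_mul_of_nonneg_left (Real.exp_le_exp.mpr ?_) (by positivity)
        have h1 : ∑ m : Fin (n+1), (l * a m)^2/2 ≤ l^2 * Rb / 2 := by
          have : ∑ m : Fin (n+1), (l * a m)^2/2 = l^2/2 * ∑ m : Fin (n+1), a m^2 := by
            rw [Finset.mul_sum]; refine Finset.sum_congr rfl fun m _ => ?_; ring
          rw [this]
          have hl2 : (0:ℝ) ≤ l^2/2 := by positivity
          nlinarith
        have h2 : -(l*t) + l^2 * Rb / 2 = -(t^2) / (2*Rb) := by
          rw [hl]; field_simp; ring
        linarith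

lemma cnt_mono (n : ℕ) {s u : Set (Fin (n+1) → Bool)} (h : s ⊆ u) : cnt n s ≤ cnt n u := by
  classical
  refine Finset.sum_le_sum fun ω _ => ?_
  rw [Set.indicator_apply, Set.indicator_apply]
  split_ifs with h1 h2
  · exact le_refl _
  · exact absurd (h h1) h2
  · exact zero_le_one
  · exact le_refl _

lemma cnt_union (n : ℕ) (s u : Set (Fin (n+1) → Bool)) :
    cnt n (s ∪ u) ≤ cnt n s + cnt n u := by
  classical
  rw [cnt, cnt, cnt, ← Finset.sum_add_distrib]
  refine Finset.sum_le_sum fun ω _ => ?_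
  simp only [Set.indicator_apply, Set.mem_union]
  split_ifs <;> simp_all

lemma chernoff_abs (n : ℕ) (a : Fin (n+1) → ℝ) (t Rb : ℝ) (hR : 0 < Rb)
    (ha : ∑ m : Fin (n+1), a m ^ 2 ≤ Rb) (ht : 0 ≤ t) :
    cnt n {ω | t ≤ |∑ m : Fin (n+1), a m * eps ω m|}
      ≤ 2 * (2^(n+1) * Real.exp (-(t^2) / (2*Rb))) := by
  have hsub : {ω : Fin (n+1) → Bool | t ≤ |∑ m : Fin (n+1), a m * eps ω m|}
      ⊆ {ω | t ≤ ∑ m : Fin (n+1), a m * eps ω m}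
        ∪ {ω | t ≤ ∑ m : Fin (n+1), (-(a m)) * eps ω m} := by
    intro ω hω
    simp only [Set.mem_setOf_eq] at hω
    rcases le_abs.mp hω with h | h
    · exact Or.inl h
    · refine Or.inr ?_
      simp only [Set.mem_setOf_eq]
      calc t ≤ -∑ m : Fin (n+1), a m * eps ω m := h
        _ = ∑ m : Fin (n+1), (-(a m)) * eps ω m := by
            rw [← Finset.sum_neg_distrib]
            exact Finset.sum_congr rfl fun m _ => by ring
  have h1 := chernoff_count n a t Rb hR ha ht
  have h2 := chernoff_count n (fun m => -(a m)) t Rb hR (by simpa using ha) ht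
  calc cnt n {ω | t ≤ |∑ m : Fin (n+1), a m * eps ω m|}
      ≤ cnt n ({ω | t ≤ ∑ m : Fin (n+1), a m * eps ω m}
          ∪ {ω | t ≤ ∑ m : Fin (n+1), (-(a m)) * eps ω m}) := cnt_mono n hsub
    _ ≤ cnt n {ω | t ≤ ∑ m : Fin (n+1), a m * eps ω m}
          + cnt n {ω | t ≤ ∑ m : Fin (n+1), (-(a m)) * eps ω m} := cnt_union n _ _
    _ ≤ 2 * (2^(n+1) * Real.exp (-(t^2) / (2*Rb))) := by linarith

lemma point_bound (n : ℕ) (a : Fin (n+1) → ℝ) (t Rb : ℝ) (hR : 0 < Rb)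
    (ha : ∑ m : Fin (n+1), a m ^ 2 ≤ Rb) (ht : 0 ≤ t) :
    signs n {ω | t ≤ |∑ m : Fin (n+1), a m * eps ω m|}
      ≤ ENNReal.ofReal (2 * Real.exp (-(t^2) / (2*Rb))) := by
  rw [signs_apply]
  apply ENNReal.ofReal_le_ofReal
  rw [div_le_iff₀ (by positivity)]
  calc cnt n {ω | t ≤ |∑ m : Fin (n+1), a m * eps ω m|}
      ≤ 2 * (2^(n+1) * Real.exp (-(t^2) / (2*Rb))) := chernoff_abs n a t Rb hR ha ht
    _ = 2 * Real.exp (-(t^2) / (2*Rb)) * 2^(n+1) := by ring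

lemma log_ge_one {n : ℕ} (hn : 3 ≤ n) : 1 ≤ Real.log n := by
  have h9 := Real.exp_one_lt_d9
  have h3 : (3:ℝ) ≤ (n:ℝ) := by exact_mod_cast hn
  calc (1:ℝ) = Real.log (Real.exp 1) := (Real.log_exp 1).symm
    _ ≤ Real.log n := Real.log_le_log (Real.exp_pos 1) (by linarith)

lemma sqrt_lower (n : ℕ) (hlog : 1 ≤ Real.log n) :
    (2:ℝ)^n / Real.sqrt ((n:ℝ)+1) ≤ Real.sqrt (R n * Real.log n) := by
  have hR1 := R_pos n
  have hRl := R_lower n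
  apply Real.le_sqrt_of_sq_le
  rw [div_pow, Real.sq_sqrt (by positivity : (0:ℝ) ≤ (n:ℝ)+1)]
  rw [div_le_iff₀ (by positivity)]
  nlinarith

lemma net (n : ℕ) (hn : 3 ≤ n) (ω : Fin (n+1) → Bool)
    (h : ∀ j ∈ Finset.range (120*n*(Nat.sqrt n+1)+1),
      |Q n ω (2*π*j/((120*n*(Nat.sqrt n+1) : ℕ) : ℝ))| ≤ (15/8)*Real.sqrt (R n * Real.log n)) :
    Mtilde n ω ≤ 2 * Real.sqrt (R n * Real.log n) := by
  have hπ := Real.pi_pos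
  have hn0 : 0 < n := by omega
  set N : ℕ := 120*n*(Nat.sqrt n+1) with hN
  have hN0 : 0 < N := by
    exact Nat.mul_pos (Nat.mul_pos (by norm_num) hn0) (Nat.succ_pos _)
  have hNr : (0:ℝ) < (N:ℝ) := by exact_mod_cast hN0
  have hlog : 1 ≤ Real.log n := log_ge_one hn
  have hsqrt := sqrt_lower n hlog
  haveI : Nonempty (Set.Icc (0:ℝ) (2*π)) :=
    ⟨⟨0, le_refl _, by positivity⟩⟩
  unfold Mtilde
  apply ciSup_le
  rintro ⟨x, hx0, hx2⟩
  simp only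
  set j : ℕ := Nat.floor (x * N / (2*π)) with hj
  have hq : 0 ≤ x * N / (2*π) := by positivity
  have hjle : j ≤ N := by
    have hle : x * N / (2*π) ≤ (N:ℝ) := by
      rw [div_le_iff₀ (by positivity)]
      nlinarith
    calc j ≤ ⌊(N:ℝ)⌋₊ := Nat.floor_mono hle
      _ = N := Nat.floor_natCast N
  have h1 : (j:ℝ) * (2*π) ≤ x * N := by
    have := Nat.floor_le hq
    rw [le_div_iff₀ (by positivity)] at this
    exact this
  have h2 : x * N < ((j:ℝ)+1) * (2*π) := by
    have := Nat.lt_floor_add_one (x * N / (2*π))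
    rw [div_lt_iff₀ (by positivity)] at this
    exact_mod_cast this
  have e0 : (0:ℝ) < 2*π/N := by positivity
  have e1 : 2*π*j/N ≤ x := by
    rw [div_le_iff₀ hNr]; nlinarith
  have hclose : |x - 2*π*j/N| ≤ 2*π/N := by
    rw [abs_le]
    constructor
    · linarith
    · have e2 : x ≤ (2*π*j + 2*π)/N := by
        rw [le_div_iff₀ hNr]; nlinarith
      have e3 : (2*π*j + 2*π)/N = 2*π*j/N + 2*π/N := by ring
      linarith [e3 ▸ e2]
  have happrox : |Q n ω x - Q n ω (2*π*j/N)| ≤ (n:ℝ)*2^n*(2*π/N) := by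
    calc |Q n ω x - Q n ω (2*π*j/N)| ≤ (n:ℝ)*2^n*|x - 2*π*j/N| := Q_lip n ω _ _
      _ ≤ (n:ℝ)*2^n*(2*π/N) := by gcongr
  have hnet := h j (Finset.mem_range.mpr (by omega))
  have hmain : (n:ℝ)*2^n*(2*π/N) ≤ (1/8) * Real.sqrt (R n * Real.log n) := by
    have hs1 : Real.sqrt ((n:ℝ)+1) ≤ ((Nat.sqrt n : ℕ):ℝ) + 1 := by
      have hnat : ((n:ℝ)+1) ≤ (((Nat.sqrt n : ℕ):ℝ)+1)^2 := by
        have := Nat.lt_succ_sqrt n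
        have : n + 1 ≤ (Nat.sqrt n + 1)^2 := by nlinarith [Nat.lt_succ_sqrt n]
        exact_mod_cast this
      calc Real.sqrt ((n:ℝ)+1) ≤ Real.sqrt ((((Nat.sqrt n : ℕ):ℝ)+1)^2) :=
            Real.sqrt_le_sqrt hnat
        _ = ((Nat.sqrt n : ℕ):ℝ) + 1 := Real.sqrt_sq (by positivity)
    have hπ4 : π ≤ 4 := Real.pi_le_four
    have hsqpos : 0 < Real.sqrt ((n:ℝ)+1) := Real.sqrt_pos.mpr (by positivity)
    have key : (n:ℝ)*2^n*(2*π/N) ≤ (1/8) * ((2:ℝ)^n / Real.sqrt ((n:ℝ)+1)) := by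
      have e : (n:ℝ)*2^n*(2*π/(N:ℝ)) = 2*π*2^n / (120*(((Nat.sqrt n : ℕ):ℝ)+1)) := by
        rw [hN]; push_cast
        field_simp
      rw [e, show (1/8) * ((2:ℝ)^n / Real.sqrt ((n:ℝ)+1))
          = (2:ℝ)^n / (8 * Real.sqrt ((n:ℝ)+1)) by ring]
      rw [div_le_div_iff₀ (by positivity) (by positivity)]
      have hp : (0:ℝ) < 2^n := by positivity
      have hb : π * Real.sqrt ((n:ℝ)+1) ≤ 4 * (((Nat.sqrt n : ℕ):ℝ) + 1) :=
        mul_le_mul hπ4 hs1 hsqpos.le (by norm_num)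
      have hs0 : (0:ℝ) ≤ ((Nat.sqrt n : ℕ):ℝ) + 1 := by positivity
      nlinarith [mul_le_mul_of_nonneg_right hb hp.le]
    linarith
  have habs : |Q n ω x| ≤ |Q n ω (2*π*j/N)| + |Q n ω x - Q n ω (2*π*j/N)| := by
    have := abs_sub_abs_le_abs_sub (Q n ω x) (Q n ω (2*π*j/N))
    linarith
  calc |Q n ω x| ≤ |Q n ω (2*π*j/N)| + |Q n ω x - Q n ω (2*π*j/N)| := habs
    _ ≤ (15/8)*Real.sqrt (R n * Real.log n) + (1/8) * Real.sqrt (R n * Real.log n) :=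
        add_le_add hnet (happrox.trans hmain)
    _ = 2 * Real.sqrt (R n * Real.log n) := by ring

lemma bad_bound (n : ℕ) (hn : 3 ≤ n) :
    signs n {ω | Mtilde n ω ≤ 2 * Real.sqrt (R n * Real.log n)}ᶜ
      ≤ ENNReal.ofReal (((120*n*(Nat.sqrt n+1)+1 : ℕ):ℝ)
          * (2 * Real.exp (-((225:ℝ)/128) * Real.log n))) := by
  have hlog : 1 ≤ Real.log n := log_ge_one hn
  have hR1 : (1:ℝ) ≤ R n := R_pos n
  have hR0 : (0:ℝ) < R n := lt_of_lt_of_le one_pos hR1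
  set N : ℕ := 120*n*(Nat.sqrt n+1) with hN
  set t : ℝ := (15/8) * Real.sqrt (R n * Real.log n) with htdef
  have ht0 : 0 ≤ t := by positivity
  have hsub : {ω | Mtilde n ω ≤ 2 * Real.sqrt (R n * Real.log n)}ᶜ
      ⊆ ⋃ j ∈ Finset.range (N+1), {ω | t ≤ |Q n ω (2*π*j/((N:ℕ):ℝ))|} := by
    intro ω hω
    rw [Set.mem_compl_iff, Set.mem_setOf_eq] at hω
    by_contra hc
    refine hω (net n hn ω fun j hj => ?_)
    by_contra hgt
    push_neg at hgt
    exact hc (Set.mem_biUnion hj (by exact hgt.le))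
  have hexp : -(t^2) / (2 * R n) = -((225:ℝ)/128) * Real.log n := by
    have hz : (0:ℝ) ≤ R n * Real.log n := by positivity
    have ht2 : t^2 = (225/64) * (R n * Real.log n) := by
      rw [htdef, mul_pow, Real.sq_sqrt hz]
      norm_num
    rw [ht2]
    field_simp
    ring
  have hpoint : ∀ j : ℕ, signs n {ω | t ≤ |Q n ω (2*π*j/((N:ℕ):ℝ))|}
      ≤ ENNReal.ofReal (2 * Real.exp (-((225:ℝ)/128) * Real.log n)) := by
    intro j
    set x : ℝ := 2*π*j/((N:ℕ):ℝ)
    have hQeq : ∀ ω, Q n ω x = ∑ m : Fin (n+1), ((n.choose m : ℝ) * Real.sin (m * x)) * eps ω m := by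
      intro ω
      unfold Q
      exact Finset.sum_congr rfl fun m _ => by ring
    have hseteq : {ω | t ≤ |Q n ω x|}
        = {ω | t ≤ |∑ m : Fin (n+1), ((n.choose m : ℝ) * Real.sin (m * x)) * eps ω m|} := by
      ext ω; rw [Set.mem_setOf_eq, Set.mem_setOf_eq, hQeq]
    have ha : ∑ m : Fin (n+1), ((n.choose m : ℝ) * Real.sin (m * x))^2 ≤ R n := by
      have h1 : ∀ m : Fin (n+1), ((n.choose m : ℝ) * Real.sin (m * x))^2 ≤ (n.choose m : ℝ)^2 := by
        intro m
        rw [mul_pow]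
        have hs : Real.sin ((m:ℝ) * x)^2 ≤ 1 := Real.sin_sq_le_one _
        nlinarith [sq_nonneg ((n.choose m : ℝ)), sq_nonneg (Real.sin ((m:ℝ)*x))]
      calc ∑ m : Fin (n+1), ((n.choose m : ℝ) * Real.sin (m * x))^2
          ≤ ∑ m : Fin (n+1), (n.choose m : ℝ)^2 := Finset.sum_le_sum fun m _ => h1 m
        _ = R n := by rw [R, Fin.sum_univ_eq_sum_range (fun m => (n.choose m : ℝ)^2)]
    rw [hseteq, ← hexp]
    exact point_bound n _ t (R n) hR0 ha ht0
  calc signs n {ω | Mtilde n ω ≤ 2 * Real.sqrt (R n * Real.log n)}ᶜ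
      ≤ signs n (⋃ j ∈ Finset.range (N+1), {ω | t ≤ |Q n ω (2*π*j/((N:ℕ):ℝ))|}) :=
        measure_mono hsub
    _ ≤ ∑ j ∈ Finset.range (N+1), signs n {ω | t ≤ |Q n ω (2*π*j/((N:ℕ):ℝ))|} :=
        measure_biUnion_finset_le _ _
    _ ≤ ∑ _j ∈ Finset.range (N+1), ENNReal.ofReal (2 * Real.exp (-((225:ℝ)/128) * Real.log n)) :=
        Finset.sum_le_sum fun j _ => hpoint j
    _ = ENNReal.ofReal (((N+1 : ℕ):ℝ) * (2 * Real.exp (-((225:ℝ)/128) * Real.log n))) := by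
        rw [Finset.sum_const, Finset.card_range, nsmul_eq_mul,
          ← ENNReal.ofReal_natCast (N+1), ← ENNReal.ofReal_mul (by positivity)]

lemma g_tendsto :
    Tendsto (fun n : ℕ => ((120*n*(Nat.sqrt n+1)+1 : ℕ):ℝ)
        * (2 * Real.exp (-((225:ℝ)/128) * Real.log n))) atTop (nhds 0) := by
  have hupper : ∀ᶠ n : ℕ in atTop,
      ((120*n*(Nat.sqrt n+1)+1 : ℕ):ℝ) * (2 * Real.exp (-((225:ℝ)/128) * Real.log n))
        ≤ 482 * (n:ℝ) ^ (-(33:ℝ)/128) := by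
    filter_upwards [eventually_ge_atTop 1] with n hn
    have hn0 : (0:ℝ) < (n:ℝ) := by exact_mod_cast hn
    have hsq1 : (1:ℝ) ≤ Real.sqrt n := by
      rw [show (1:ℝ) = Real.sqrt 1 by simp]
      exact Real.sqrt_le_sqrt (by exact_mod_cast hn)
    have hs : ((Nat.sqrt n : ℕ):ℝ) ≤ Real.sqrt n := by
      rw [show Real.sqrt (n:ℝ) = Real.sqrt ((n:ℕ):ℝ) by norm_num]
      apply Real.le_sqrt_of_sq_le
      exact_mod_cast Nat.sqrt_le' n
    have hcard : ((120*n*(Nat.sqrt n+1)+1 : ℕ):ℝ) ≤ 241 * ((n:ℝ) * Real.sqrt n) := by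
      push_cast
      have h1 : ((Nat.sqrt n : ℕ):ℝ) + 1 ≤ 2 * Real.sqrt n := by linarith
      have hn1 : (1:ℝ) ≤ (n:ℝ) := by exact_mod_cast hn
      have h2 : (1:ℝ) ≤ (n:ℝ) * Real.sqrt n := by nlinarith [mul_le_mul hn1 hsq1 zero_le_one hn0.le]
      nlinarith
    have hrw : Real.exp (-((225:ℝ)/128) * Real.log n) = (n:ℝ) ^ (-(225:ℝ)/128) := by
      rw [Real.rpow_def_of_pos hn0, mul_comm]
      norm_num
    have hms : (n:ℝ) * Real.sqrt n = (n:ℝ) ^ ((3:ℝ)/2) := by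
      rw [Real.sqrt_eq_rpow, show ((3:ℝ)/2) = 1 + 1/2 by norm_num,
        Real.rpow_add hn0, Real.rpow_one]
    have hfinal : ((n:ℝ) ^ ((3:ℝ)/2)) * ((n:ℝ) ^ (-(225:ℝ)/128)) = (n:ℝ) ^ (-(33:ℝ)/128) := by
      rw [← Real.rpow_add hn0]
      norm_num
    calc ((120*n*(Nat.sqrt n+1)+1 : ℕ):ℝ) * (2 * Real.exp (-((225:ℝ)/128) * Real.log n))
        ≤ (241 * ((n:ℝ) * Real.sqrt n)) * (2 * Real.exp (-((225:ℝ)/128) * Real.log n)) := by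
          have : (0:ℝ) < 2 * Real.exp (-((225:ℝ)/128) * Real.log n) := by positivity
          nlinarith
      _ = 482 * (((n:ℝ) ^ ((3:ℝ)/2)) * ((n:ℝ) ^ (-(225:ℝ)/128))) := by
          rw [hrw, hms]; ring
      _ = 482 * (n:ℝ) ^ (-(33:ℝ)/128) := by rw [hfinal]
  have hlim : Tendsto (fun n : ℕ => 482 * (n:ℝ) ^ (-(33:ℝ)/128)) atTop (nhds 0) := by
    have h1 : Tendsto (fun x : ℝ => x ^ (-(33:ℝ)/128)) atTop (nhds 0) := by
      have := tendsto_rpow_neg_atTop (by norm_num : (0:ℝ) < 33/128)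
      convert this using 2
      norm_num
    have h2 := h1.comp (tendsto_natCast_atTop_atTop (R := ℝ))
    have h3 := h2.const_mul (482:ℝ)
    simpa using h3
  have hlower : ∀ᶠ n : ℕ in atTop,
      (0:ℝ) ≤ ((120*n*(Nat.sqrt n+1)+1 : ℕ):ℝ) * (2 * Real.exp (-((225:ℝ)/128) * Real.log n)) :=
    Filter.Eventually.of_forall fun n => by positivity
  exact squeeze_zero' hlower hupper hlim

theorem stmt2 :
    Tendsto
      (fun n : ℕ =>
        signs n {ω | Mtilde n ω ≤ 2 * Real.sqrt (R n * Real.log n)})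
      atTop (nhds 1) := by
  have hbad : Tendsto (fun n : ℕ =>
      signs n {ω | Mtilde n ω ≤ 2 * Real.sqrt (R n * Real.log n)}ᶜ) atTop (nhds 0) := by
    apply tendsto_of_tendsto_of_tendsto_of_le_of_le'
      (g := fun _ : ℕ => (0:ℝ≥0∞))
      (h := fun n : ℕ => ENNReal.ofReal (((120*n*(Nat.sqrt n+1)+1 : ℕ):ℝ)
        * (2 * Real.exp (-((225:ℝ)/128) * Real.log n))))
      tendsto_const_nhds
    · have := ENNReal.tendsto_ofReal (g_tendsto)
      simpa using this
    · exact Filter.Eventually.of_forall fun n => zero_le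
    · filter_upwards [eventually_ge_atTop 3] with n hn
      exact bad_bound n hn
  have hgood : ∀ n : ℕ, signs n {ω | Mtilde n ω ≤ 2 * Real.sqrt (R n * Real.log n)}
      = 1 - signs n {ω | Mtilde n ω ≤ 2 * Real.sqrt (R n * Real.log n)}ᶜ := by
    intro n
    haveI : IsProbabilityMeasure (signs n) := PMF.toMeasure.isProbabilityMeasure _
    have hc := measure_compl (μ := signs n)
      (s := {ω | Mtilde n ω ≤ 2 * Real.sqrt (R n * Real.log n)})
      MeasurableSet.of_discrete (measure_ne_top _ _)
    rw [hc, measure_univ]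
    exact (ENNReal.sub_sub_cancel ENNReal.one_ne_top prob_le_one).symm
  have hfinal := ENNReal.Tendsto.sub
    (tendsto_const_nhds (f := atTop (α := ℕ)) (x := (1:ℝ≥0∞))) hbad (Or.inl ENNReal.one_ne_top)
  rw [tsub_zero] at hfinal
  exact Tendsto.congr (fun n => (hgood n).symm) hfinal
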